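/- arXiv:1410.0347 — 2 statements merged into one kernel-verified Lean document; each statement's English description precedes it below -/
import Mathlib

section
/- Kullback–Leibler divergence between centered Gaussians with comparable covariances: let H² be positive definite and 0 ⪯ B² ⪯ δ² H² with δ² ≤ 1/2, set Σ₁ = H² − B² and Σ₂ = H². Then KL(N(0,Σ₁), N(0,Σ₂)) ≤ p · ‖H^{-1} B² H^{-1}‖²/2 · c for an explicit constant c; in particular if ‖H^{-1} B² H^{-1}‖ ≤ δ² ≤ 1/2 then KL(N(0,Σ₁), N(0,Σ₂)) ≤ p δ⁴. -/
open Matrix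

set_option maxHeartbeats 1000000

/-- KL divergence between centered Gaussians with comparable covariances: if `H²` is positive
definite, `0 ⪯ B² ⪯ δ² H²` with `δ² ≤ 1/2`, `Σ₁ = H² - B²`, `Σ₂ = H²`, then
`KL(N(0,Σ₁), N(0,Σ₂)) = ½(tr(Σ₂⁻¹Σ₁) - p - log det(Σ₂⁻¹Σ₁)) ≤ p δ⁴`. -/
theorem gaussian_kl_bound_comparable_covariances
    {p : ℕ} (H2 B2 : Matrix (Fin p) (Fin p) ℝ)
    (hH2 : H2.PosDef) (hB2 : B2.PosSemidef)
    (δ2 : ℝ) (hδ2nn : 0 ≤ δ2) (hδ2 : δ2 ≤ 1 / 2)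
    (hLoewner : (δ2 • H2 - B2).PosSemidef)
    (S1 S2 : Matrix (Fin p) (Fin p) ℝ) (hS1 : S1 = H2 - B2) (hS2 : S2 = H2)
    (KL : ℝ)
    (hKL : KL = (1 / 2) * ((S2⁻¹ * S1).trace - p - Real.log (S2⁻¹ * S1).det)) :
    KL ≤ p * δ2 ^ 2 := by
  classical
  rw [hKL, hS1, hS2]
  -- square root of H2
  open scoped MatrixOrder in
  set C : Matrix (Fin p) (Fin p) ℝ := CFC.sqrt H2 with hC
  have hCpsd : C.PosSemidef := open scoped MatrixOrder in
    Matrix.nonneg_iff_posSemidef.mp (CFC.sqrt_nonneg H2)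
  have hC2 : C * C = H2 := open scoped MatrixOrder in
    CFC.sqrt_mul_sqrt_self H2 (Matrix.nonneg_iff_posSemidef.mpr hH2.posSemidef)
  have hCdet : C.det ≠ 0 := by
    intro h
    have : H2.det = 0 := by rw [← hC2, det_mul, h, mul_zero]
    exact (hH2.det_pos).ne' this
  have hCu : IsUnit C.det := isUnit_iff_ne_zero.mpr hCdet
  have hH2u : IsUnit H2.det := isUnit_iff_ne_zero.mpr hH2.det_pos.ne'
  have hCinv : C⁻¹ * C = 1 := nonsing_inv_mul C hCu
  have hCinv' : C * C⁻¹ = 1 := mul_nonsing_inv C hCu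
  have hCherm : C.IsHermitian := hCpsd.1
  have hCinvherm : C⁻¹.IsHermitian := hCherm.inv
  -- the conjugated matrix N
  set N : Matrix (Fin p) (Fin p) ℝ := C⁻¹ * B2 * C⁻¹ with hN
  have hNpsd : N.PosSemidef := by
    have := hB2.mul_mul_conjTranspose_same C⁻¹
    rwa [hCinvherm.eq] at this
  have hNherm : N.IsHermitian := hNpsd.1
  have hconjH2 : C⁻¹ * H2 * C⁻¹ = 1 := by
    rw [← hC2, mul_assoc, mul_assoc, hCinv', mul_one, hCinv]
  have hDpsd : (δ2 • (1 : Matrix (Fin p) (Fin p) ℝ) - N).PosSemidef := by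
    have h := hLoewner.mul_mul_conjTranspose_same C⁻¹
    rw [hCinvherm.eq] at h
    have heq : C⁻¹ * (δ2 • H2 - B2) * C⁻¹
        = δ2 • (1 : Matrix (Fin p) (Fin p) ℝ) - N := by
      rw [Matrix.mul_sub, Matrix.sub_mul, hN]
      congr 1
      rw [Matrix.mul_smul, Matrix.smul_mul, hconjH2]
    rwa [heq] at h
  -- similarity
  have hsim : H2⁻¹ * (H2 - B2) = C⁻¹ * ((1 : Matrix (Fin p) (Fin p) ℝ) - N) * C := by
    have l1 : H2⁻¹ * (H2 - B2) = 1 - C⁻¹ * C⁻¹ * B2 := by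
      rw [Matrix.mul_sub, nonsing_inv_mul H2 hH2u, ← hC2, Matrix.mul_inv_rev]
    have l2 : C⁻¹ * ((1 : Matrix (Fin p) (Fin p) ℝ) - N) * C
        = 1 - C⁻¹ * C⁻¹ * B2 := by
      rw [Matrix.mul_sub, Matrix.mul_one, Matrix.sub_mul, hCinv]
      congr 1
      simp only [hN, mul_assoc, hCinv, mul_one]
    rw [l1, l2]
  -- eigenvalues of N
  set μ : Fin p → ℝ := hNherm.eigenvalues with hμ
  have hμ0 : ∀ i, 0 ≤ μ i := hNpsd.eigenvalues_nonneg
  have hμδ : ∀ i, μ i ≤ δ2 := by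
    intro i
    set v : Fin p → ℝ := ⇑(hNherm.eigenvectorBasis i) with hv
    have hvv : v ⬝ᵥ v = 1 := by
      have h1 : ‖hNherm.eigenvectorBasis i‖ = 1 := hNherm.eigenvectorBasis.orthonormal.1 i
      have h2 : (inner ℝ (hNherm.eigenvectorBasis i) (hNherm.eigenvectorBasis i) : ℝ)
          = star v ⬝ᵥ v := EuclideanSpace.inner_eq_star_dotProduct _ _
      rw [real_inner_self_eq_norm_sq, h1] at h2
      simpa using h2.symm
    have hNv : N *ᵥ v = μ i • v := hNherm.mulVec_eigenvectorBasis i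
    have hpos := hDpsd.dotProduct_mulVec_nonneg v
    simp only [Matrix.sub_mulVec, Matrix.smul_mulVec, Matrix.one_mulVec, hNv,
      dotProduct_sub, dotProduct_smul, smul_eq_mul, RCLike.re_to_real, star_trivial,
      hvv, mul_one] at hpos
    linarith
  -- unitary diagonalization of 1 - N
  set V : Matrix (Fin p) (Fin p) ℝ := (hNherm.eigenvectorUnitary : Matrix (Fin p) (Fin p) ℝ)
    with hV
  have hVV : V * star V = 1 :=
    (Matrix.mem_unitaryGroup_iff).mp hNherm.eigenvectorUnitary.2
  have hVV' : star V * V = 1 :=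
    (Matrix.mem_unitaryGroup_iff').mp hNherm.eigenvectorUnitary.2
  have hstμ : N = V * diagonal μ * star V := by
    have hst := hNherm.spectral_theorem
    rw [Unitary.conjStarAlgAut_apply, ← hV] at hst
    exact hst.trans (congrArg (fun D => V * D * star V) (by simp [hμ]))
  have hd : diagonal (fun i => 1 - μ i) = (1 : Matrix (Fin p) (Fin p) ℝ) - diagonal μ := by
    ext i j
    by_cases h : i = j <;> simp [diagonal_apply, h, Matrix.one_apply]
  have hdiag : (1 : Matrix (Fin p) (Fin p) ℝ) - N
      = V * diagonal (fun i => 1 - μ i) * star V := by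
    rw [hd, Matrix.mul_sub, Matrix.mul_one, Matrix.sub_mul, hVV, ← hstμ]
  have htr : ((1 : Matrix (Fin p) (Fin p) ℝ) - N).trace = ∑ i, (1 - μ i) := by
    rw [hdiag, Matrix.trace_mul_cycle, hVV', one_mul, trace_diagonal]
  have hdet : ((1 : Matrix (Fin p) (Fin p) ℝ) - N).det = ∏ i, (1 - μ i) := by
    have h1 : (star V).det * V.det = 1 := by rw [← det_mul, hVV', det_one]
    rw [hdiag, det_mul, det_mul, det_diagonal]
    calc V.det * (∏ i, (1 - μ i)) * (star V).det
        = ((star V).det * V.det) * ∏ i, (1 - μ i) := by ring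
      _ = ∏ i, (1 - μ i) := by rw [h1, one_mul]
  -- trace and det of the similar matrix
  have htr' : (H2⁻¹ * (H2 - B2)).trace = ∑ i, (1 - μ i) := by
    rw [hsim, Matrix.trace_mul_cycle, hCinv', one_mul, htr]
  have hdet' : (H2⁻¹ * (H2 - B2)).det = ∏ i, (1 - μ i) := by
    have h1 : C⁻¹.det * C.det = 1 := by rw [← det_mul, hCinv, det_one]
    rw [hsim, det_mul, det_mul, hdet]
    calc C⁻¹.det * (∏ i, (1 - μ i)) * C.det
        = (C⁻¹.det * C.det) * ∏ i, (1 - μ i) := by ring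
      _ = ∏ i, (1 - μ i) := by rw [h1, one_mul]
  have hfac : ∀ i, (1:ℝ)/2 ≤ 1 - μ i := fun i => by
    have := hμδ i; linarith
  have hfacpos : ∀ i, (0:ℝ) < 1 - μ i := fun i => lt_of_lt_of_le (by norm_num) (hfac i)
  have hlog : Real.log (∏ i, (1 - μ i)) = ∑ i, Real.log (1 - μ i) :=
    Real.log_prod (fun i _ => (hfacpos i).ne')
  rw [htr', hdet', hlog]
  have key : ∀ i, -μ i - Real.log (1 - μ i) ≤ 2 * δ2 ^ 2 := by
    intro i
    have h1 : Real.log ((1 - μ i)⁻¹) ≤ (1 - μ i)⁻¹ - 1 :=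
      Real.log_le_sub_one_of_pos (inv_pos.mpr (hfacpos i))
    rw [Real.log_inv] at h1
    have h2 : (1 - μ i)⁻¹ - 1 = μ i / (1 - μ i) := by
      rw [eq_div_iff (hfacpos i).ne', sub_mul, inv_mul_cancel₀ (hfacpos i).ne']
      ring
    have h4 : μ i / (1 - μ i) - μ i ≤ 2 * μ i ^ 2 := by
      rw [div_sub' (hfacpos i).ne', div_le_iff₀ (hfacpos i)]
      nlinarith [sq_nonneg (μ i), hμ0 i, hfac i]
    have h5 : μ i ^ 2 ≤ δ2 ^ 2 := by
      have := hμ0 i; have := hμδ i; nlinarith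
    nlinarith
  have hsumle : ∑ i, (-μ i - Real.log (1 - μ i)) ≤ (p : ℝ) * (2 * δ2 ^ 2) := by
    calc ∑ i, (-μ i - Real.log (1 - μ i)) ≤ ∑ _i : Fin p, 2 * δ2 ^ 2 :=
          Finset.sum_le_sum (fun i _ => key i)
      _ = (p : ℝ) * (2 * δ2 ^ 2) := by
          rw [Finset.sum_const, Finset.card_univ, Fintype.card_fin, nsmul_eq_mul]
  have hrw : (∑ i, (1 - μ i)) - (p:ℝ) - ∑ i, Real.log (1 - μ i)
      = ∑ i, (-μ i - Real.log (1 - μ i)) := by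
    simp only [Finset.sum_sub_distrib, Finset.sum_const, Finset.card_univ, Fintype.card_fin,
      nsmul_eq_mul, mul_one, Finset.sum_neg_distrib]
    ring
  rw [hrw]
  linarith
end

section
/- GLM modelling bias bound: let Y_1,…,Y_n be independent real random variables with Var Y_i > 0, let Ψ_i ∈ ℝ^p and d : ℝ → ℝ with derivative d′. Define H² := Σ_i E[(Y_i − d′(Ψ_i^T θ*))²] Ψ_i Ψ_i^T and B² := Σ_i (E Y_i − d′(Ψ_i^T θ*))² Ψ_i Ψ_i^T, assuming H² is positive definite. Then ‖H^{-1} B² H^{-1}‖ ≤ 1 − min_{1≤i≤n} Var Y_i / (Var Y_i + (E Y_i − d′(Ψ_i^T θ*))²) < 1. -/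
open MeasureTheory Matrix ProbabilityTheory
open scoped Matrix.Norms.L2Operator


lemma vmv_mulVec {p : ℕ} (u x : Fin p → ℝ) : vecMulVec u u *ᵥ x = (u ⬝ᵥ x) • u := by
  ext i
  simp only [vecMulVec, mulVec, dotProduct, of_apply, Pi.smul_apply, smul_eq_mul,
    Finset.sum_mul]
  exact Finset.sum_congr rfl fun j _ => by ring

lemma quad1 {p : ℕ} (u x : Fin p → ℝ) : x ⬝ᵥ (vecMulVec u u *ᵥ x) = (u ⬝ᵥ x)^2 := by
  rw [vmv_mulVec, dotProduct_smul, smul_eq_mul, dotProduct_comm, sq]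

lemma sum_mulVec' {n p : ℕ} (M : Fin n → Matrix (Fin p) (Fin p) ℝ) (x : Fin p → ℝ) :
    (∑ i, M i) *ᵥ x = ∑ i, (M i *ᵥ x) := by
  ext k
  simp only [mulVec, dotProduct, Matrix.sum_apply, Finset.sum_apply, Finset.sum_mul]
  exact Finset.sum_comm

lemma dotProduct_sum' {n p : ℕ} (x : Fin p → ℝ) (v : Fin n → Fin p → ℝ) :
    x ⬝ᵥ (∑ i, v i) = ∑ i, x ⬝ᵥ v i := by
  simp only [dotProduct, Finset.sum_apply, Finset.mul_sum]
  exact Finset.sum_comm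

lemma quadsum {n p : ℕ} (r : Fin n → ℝ) (u : Fin n → Fin p → ℝ) (x : Fin p → ℝ) :
    x ⬝ᵥ ((∑ i, r i • vecMulVec (u i) (u i)) *ᵥ x) = ∑ i, r i * (u i ⬝ᵥ x)^2 := by
  rw [sum_mulVec', dotProduct_sum']
  refine Finset.sum_congr rfl fun i _ => ?_
  rw [smul_mulVec, dotProduct_smul, smul_eq_mul, quad1]

lemma symdot {p : ℕ} (M : Matrix (Fin p) (Fin p) ℝ) (h : Mᵀ = M) (u v : Fin p → ℝ) :
    (M *ᵥ u) ⬝ᵥ v = u ⬝ᵥ (M *ᵥ v) := by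
  rw [dotProduct_mulVec, ← h, vecMul_transpose, h]

lemma int_sq_eq {Ω : Type*} [MeasurableSpace Ω] (μ : Measure Ω) [IsProbabilityMeasure μ]
    (Y : Ω → ℝ) (hY : MemLp Y 2 μ) (t : ℝ) :
    ∫ ω, (Y ω - t)^2 ∂μ = variance Y μ + ((∫ ω, Y ω ∂μ) - t)^2 := by
  have hi1 : Integrable Y μ := hY.integrable one_le_two
  have hi2 : Integrable (fun ω => Y ω^2) μ := hY.integrable_sq
  have hi3 : Integrable (fun ω => Y ω^2 - 2*t*Y ω) μ := hi2.sub (hi1.const_mul _)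
  have he : ∀ ω, (Y ω - t)^2 = Y ω^2 - 2*t*Y ω + t^2 := fun ω => by ring
  rw [variance_eq_sub hY]
  simp_rw [he]
  rw [integral_add hi3 (integrable_const _),
    integral_sub hi2 (hi1.const_mul _), integral_const_mul, integral_const]
  simp only [Pi.pow_apply, measure_univ, ENNReal.toReal_one, smul_eq_mul, one_mul, probReal_univ]
  ring

lemma sqrt_facts {p : ℕ} (M : Matrix (Fin p) (Fin p) ℝ) (hM : M.PosSemidef) :
    ((hM.1.eigenvectorUnitary : Matrix (Fin p) (Fin p) ℝ) *
      diagonal (Real.sqrt ∘ hM.1.eigenvalues) *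
      (star hM.1.eigenvectorUnitary : Matrix (Fin p) (Fin p) ℝ))ᵀ =
    (hM.1.eigenvectorUnitary : Matrix (Fin p) (Fin p) ℝ) *
      diagonal (Real.sqrt ∘ hM.1.eigenvalues) *
      (star hM.1.eigenvectorUnitary : Matrix (Fin p) (Fin p) ℝ) ∧
    (hM.1.eigenvectorUnitary : Matrix (Fin p) (Fin p) ℝ) *
      diagonal (Real.sqrt ∘ hM.1.eigenvalues) *
      (star hM.1.eigenvectorUnitary : Matrix (Fin p) (Fin p) ℝ) *
    ((hM.1.eigenvectorUnitary : Matrix (Fin p) (Fin p) ℝ) *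
      diagonal (Real.sqrt ∘ hM.1.eigenvalues) *
      (star hM.1.eigenvectorUnitary : Matrix (Fin p) (Fin p) ℝ)) = M := by
  set U : Matrix (Fin p) (Fin p) ℝ := ↑hM.1.eigenvectorUnitary with hUdef
  have hU : (star hM.1.eigenvectorUnitary : Matrix (Fin p) (Fin p) ℝ) = Uᵀ := by
    rw [star_eq_conjTranspose, conjTranspose_eq_transpose_of_trivial]
  have hUU : Uᵀ * U = 1 := by rw [← hU]; exact hM.1.eigenvectorUnitary.2.1
  rw [hU]
  constructor
  · rw [transpose_mul, transpose_mul, transpose_transpose, diagonal_transpose, Matrix.mul_assoc]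
  · calc U * diagonal (Real.sqrt ∘ hM.1.eigenvalues) * Uᵀ *
          (U * diagonal (Real.sqrt ∘ hM.1.eigenvalues) * Uᵀ)
        = U * (diagonal (Real.sqrt ∘ hM.1.eigenvalues) *
            diagonal (Real.sqrt ∘ hM.1.eigenvalues)) * Uᵀ := by
          simp only [Matrix.mul_assoc]; rw [← Matrix.mul_assoc Uᵀ U, hUU, Matrix.one_mul]
      _ = M := by
          rw [diagonal_mul_diagonal]
          conv_rhs => rw [hM.1.spectral_theorem]
          rw [Unitary.conjStarAlgAut_apply, hU]
          have hd : (fun i => (Real.sqrt ∘ hM.1.eigenvalues) i * (Real.sqrt ∘ hM.1.eigenvalues) i)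
              = RCLike.ofReal ∘ hM.1.eigenvalues := by
            funext i
            simp [Real.mul_self_sqrt (hM.eigenvalues_nonneg i)]
          rw [hd]

set_option maxHeartbeats 800000 in
lemma norm_le_of_quad {p : ℕ} (M : Matrix (Fin p) (Fin p) ℝ) (hM : M.PosSemidef)
    {c : ℝ} (hc : 0 ≤ c) (h : ∀ x : Fin p → ℝ, x ⬝ᵥ (M *ᵥ x) ≤ c * (x ⬝ᵥ x)) :
    ‖M‖ ≤ c := by
  have keynorm : ∀ y : Fin p → ℝ,
      ‖(WithLp.equiv 2 (Fin p → ℝ)).symm y‖ = Real.sqrt (y ⬝ᵥ y) := by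
    intro y
    rw [EuclideanSpace.norm_eq]
    congr 1
    simp [dotProduct, Real.norm_eq_abs, sq_abs, sq]
  obtain ⟨hSt, hSS⟩ := sqrt_facts M hM
  set S := (hM.1.eigenvectorUnitary : Matrix (Fin p) (Fin p) ℝ) *
      diagonal (Real.sqrt ∘ hM.1.eigenvalues) *
      (star hM.1.eigenvectorUnitary : Matrix (Fin p) (Fin p) ℝ) with hSdef
  have hq : ∀ x' : Fin p → ℝ, (M *ᵥ x') ⬝ᵥ (M *ᵥ x') ≤ c^2 * (x' ⬝ᵥ x') := by
    intro x'
    set z := S *ᵥ x' with hz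
    have hMx : M *ᵥ x' = S *ᵥ z := by rw [hz, mulVec_mulVec, hSS]
    have h1 : (M *ᵥ x') ⬝ᵥ (M *ᵥ x') = z ⬝ᵥ (M *ᵥ z) := by
      rw [hMx, symdot S hSt, mulVec_mulVec, hSS]
    have h2 : z ⬝ᵥ z = x' ⬝ᵥ (M *ᵥ x') := by
      rw [hz, symdot S hSt, mulVec_mulVec, hSS]
    calc (M *ᵥ x') ⬝ᵥ (M *ᵥ x') = z ⬝ᵥ (M *ᵥ z) := h1
      _ ≤ c * (z ⬝ᵥ z) := h z
      _ = c * (x' ⬝ᵥ (M *ᵥ x')) := by rw [h2]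
      _ ≤ c * (c * (x' ⬝ᵥ x')) := by
          exact mul_le_mul_of_nonneg_left (h x') hc
      _ = c^2 * (x' ⬝ᵥ x') := by ring
  rw [Matrix.l2_opNorm_def]
  refine ContinuousLinearMap.opNorm_le_bound _ hc fun x => ?_
  set x' : Fin p → ℝ := WithLp.equiv 2 (Fin p → ℝ) x with hx'
  have hxe : x = (WithLp.equiv 2 (Fin p → ℝ)).symm x' := rfl
  have happ : ((Matrix.toEuclideanLin ≪≫ₗ LinearMap.toContinuousLinearMap) M) x
      = (WithLp.equiv 2 (Fin p → ℝ)).symm (M *ᵥ x') := rfl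
  rw [happ, keynorm, hxe, keynorm]
  calc Real.sqrt ((M *ᵥ x') ⬝ᵥ (M *ᵥ x')) ≤ Real.sqrt (c^2 * (x' ⬝ᵥ x')) :=
        Real.sqrt_le_sqrt (hq x')
    _ = c * Real.sqrt (x' ⬝ᵥ x') := by
        rw [Real.sqrt_mul (sq_nonneg c), Real.sqrt_sq hc]

set_option maxHeartbeats 1600000 in
/-- GLM modelling bias bound: with `H² = ∑ E[(Yᵢ - d'(Ψᵢᵀθ*))²] ΨᵢΨᵢᵀ` positive definite and
`B² = ∑ (E Yᵢ - d'(Ψᵢᵀθ*))² ΨᵢΨᵢᵀ`, the spectral norm of `H⁻¹B²H⁻¹` (with `H = (H²)^{1/2}`)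
is at most `1 - minᵢ Var Yᵢ/(Var Yᵢ + (E Yᵢ - d'(Ψᵢᵀθ*))²)`, which is strictly less than 1. -/
theorem glm_modelling_bias_bound
    {Ω : Type*} [MeasurableSpace Ω] (μ : Measure Ω) [IsProbabilityMeasure μ]
    (n p : ℕ) (hn : 0 < n)
    (Y : Fin n → Ω → ℝ) (hmeas : ∀ i, Measurable (Y i))
    (hL2 : ∀ i, MemLp (Y i) 2 μ)
    (hvar : ∀ i, 0 < variance (Y i) μ)
    (Ψ : Fin n → Fin p → ℝ) (d' : ℝ → ℝ) (θ : Fin p → ℝ)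
    (H2 B2 : Matrix (Fin p) (Fin p) ℝ)
    (hH2 : H2 = ∑ i, (∫ ω, (Y i ω - d' (Ψ i ⬝ᵥ θ)) ^ 2 ∂μ) • vecMulVec (Ψ i) (Ψ i))
    (hB2 : B2 = ∑ i, ((∫ ω, Y i ω ∂μ) - d' (Ψ i ⬝ᵥ θ)) ^ 2 • vecMulVec (Ψ i) (Ψ i))
    (hH2pd : H2.PosDef)
    (H : Matrix (Fin p) (Fin p) ℝ) (hH : H = (hH2pd.posSemidef.1.eigenvectorUnitary : Matrix (Fin p) (Fin p) ℝ) *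
      diagonal (Real.sqrt ∘ hH2pd.posSemidef.1.eigenvalues) *
      (star hH2pd.posSemidef.1.eigenvectorUnitary : Matrix (Fin p) (Fin p) ℝ)) :
    ‖H⁻¹ * B2 * H⁻¹‖
        ≤ 1 - ⨅ i, variance (Y i) μ /
            (variance (Y i) μ + ((∫ ω, Y i ω ∂μ) - d' (Ψ i ⬝ᵥ θ)) ^ 2) ∧
    1 - ⨅ i, variance (Y i) μ /
        (variance (Y i) μ + ((∫ ω, Y i ω ∂μ) - d' (Ψ i ⬝ᵥ θ)) ^ 2) < 1 := by
  haveI : Nonempty (Fin n) := Fin.pos_iff_nonempty.mp hn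
  set v : Fin n → ℝ := fun i => variance (Y i) μ with hv
  set b : Fin n → ℝ := fun i => ((∫ ω, Y i ω ∂μ) - d' (Ψ i ⬝ᵥ θ)) ^ 2 with hb
  set a : Fin n → ℝ := fun i => ∫ ω, (Y i ω - d' (Ψ i ⬝ᵥ θ)) ^ 2 ∂μ with ha
  have key : ∀ i, a i = v i + b i := fun i => int_sq_eq μ (Y i) (hL2 i) _
  set r : Fin n → ℝ := fun i => v i / (v i + b i) with hr
  set c : ℝ := 1 - ⨅ i, r i with hcdef
  have hpos : ∀ i, 0 < v i + b i := fun i =>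
    add_pos_of_pos_of_nonneg (hvar i) (sq_nonneg _)
  have hapos : ∀ i, 0 < a i := fun i => (key i) ▸ hpos i
  have hbdd : BddBelow (Set.range r) := (Set.finite_range r).bddBelow
  have hr1 : ∀ i, r i ≤ 1 := fun i =>
    (div_le_one (hpos i)).2 (le_add_of_nonneg_right (sq_nonneg _))
  have hrpos : ∀ i, 0 < r i := fun i => div_pos (hvar i) (hpos i)
  obtain ⟨i0, hi0⟩ := exists_eq_ciInf_of_finite (f := r)
  have hinfpos : 0 < ⨅ i, r i := hi0 ▸ hrpos i0
  have hinfle1 : (⨅ i, r i) ≤ 1 := hi0 ▸ hr1 i0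
  have hc0 : 0 ≤ c := sub_nonneg.2 hinfle1
  have hc1 : c < 1 := sub_lt_self _ hinfpos
  have hkey : ∀ i, b i ≤ c * a i := by
    intro i
    have h1 : 1 - r i ≤ c := sub_le_sub_left (ciInf_le hbdd i) 1
    have h2 : b i = (1 - r i) * (v i + b i) := by
      have hne : v i + b i ≠ 0 := (hpos i).ne'
      rw [hr]
      field_simp
      ring
    calc b i = (1 - r i) * (v i + b i) := h2
      _ ≤ c * (v i + b i) := mul_le_mul_of_nonneg_right h1 (hpos i).le
      _ = c * a i := by rw [key i]
  -- matrix facts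
  have hB2ps : B2.PosSemidef := by
    refine PosSemidef.of_dotProduct_mulVec_nonneg ?_ ?_
    · show B2ᴴ = B2
      rw [hB2]
      ext i j
      simp only [conjTranspose_apply, Matrix.sum_apply, Matrix.smul_apply, vecMulVec, of_apply,
        smul_eq_mul, star_trivial]
      exact Finset.sum_congr rfl fun k _ => by ring
    · intro x
      rw [star_trivial, hB2, quadsum]
      exact Finset.sum_nonneg fun i _ => mul_nonneg (sq_nonneg _) (sq_nonneg _)
  have hHsym : Hᵀ = H := by
    rw [hH]; exact (sqrt_facts H2 hH2pd.posSemidef).1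
  have hHH : H * H = H2 := by rw [hH]; exact (sqrt_facts H2 hH2pd.posSemidef).2
  have hdetH : IsUnit H.det := by
    have h1 : H.det * H.det = H2.det := by rw [← det_mul, hHH]
    have h2 : (0:ℝ) < H2.det := hH2pd.det_pos
    refine isUnit_iff_ne_zero.2 fun h0 => ?_
    rw [h0, mul_zero] at h1
    exact h2.ne' h1.symm
  have hHinvsym : H⁻¹ᵀ = H⁻¹ := by rw [transpose_nonsing_inv, hHsym]
  have hone : H * H⁻¹ = 1 := mul_nonsing_inv H hdetH
  have hMps : (H⁻¹ * B2 * H⁻¹).PosSemidef := by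
    have hct : (H⁻¹)ᴴ = H⁻¹ := by
      ext i j
      rw [conjTranspose_apply, star_trivial]
      conv_rhs => rw [← hHinvsym]
      rw [transpose_apply]
    have := hB2ps.conjTranspose_mul_mul_same H⁻¹
    rwa [hct] at this
  have hquad : ∀ x : Fin p → ℝ, x ⬝ᵥ ((H⁻¹ * B2 * H⁻¹) *ᵥ x) ≤ c * (x ⬝ᵥ x) := by
    intro x
    have e1 : x ⬝ᵥ ((H⁻¹ * B2 * H⁻¹) *ᵥ x)
        = (H⁻¹ *ᵥ x) ⬝ᵥ (B2 *ᵥ (H⁻¹ *ᵥ x)) := by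
      rw [symdot H⁻¹ hHinvsym, mulVec_mulVec, mulVec_mulVec, Matrix.mul_assoc]
    have e2 : (H⁻¹ *ᵥ x) ⬝ᵥ (H2 *ᵥ (H⁻¹ *ᵥ x)) = x ⬝ᵥ x := by
      have hx : H *ᵥ (H⁻¹ *ᵥ x) = x := by
        rw [mulVec_mulVec, hone, one_mulVec]
      rw [← hHH, ← mulVec_mulVec, hx, ← symdot H hHsym, hx]
    calc x ⬝ᵥ ((H⁻¹ * B2 * H⁻¹) *ᵥ x)
        = (H⁻¹ *ᵥ x) ⬝ᵥ (B2 *ᵥ (H⁻¹ *ᵥ x)) := e1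
      _ = ∑ i, b i * (Ψ i ⬝ᵥ (H⁻¹ *ᵥ x))^2 := by rw [hB2, quadsum]
      _ ≤ ∑ i, (c * a i) * (Ψ i ⬝ᵥ (H⁻¹ *ᵥ x))^2 :=
          Finset.sum_le_sum fun i _ =>
            mul_le_mul_of_nonneg_right (hkey i) (sq_nonneg _)
      _ = c * ∑ i, a i * (Ψ i ⬝ᵥ (H⁻¹ *ᵥ x))^2 := by
          rw [Finset.mul_sum]; exact Finset.sum_congr rfl fun i _ => by ring
      _ = c * ((H⁻¹ *ᵥ x) ⬝ᵥ (H2 *ᵥ (H⁻¹ *ᵥ x))) := by rw [hH2, quadsum]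
      _ = c * (x ⬝ᵥ x) := by rw [e2]
  exact ⟨norm_le_of_quad _ hMps hc0 hquad, hc1⟩
end
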